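/- Let a, n ∈ ℤ with a ≥ 1 and n ≥ 2, and let p be a prime with p > a + 1. Then the polynomial f_{n,a,p}(x) = x^n − a·x^{n−1} − p has at least two distinct complex roots of modulus strictly greater than 1; in particular, if λ denotes its unique positive real root, there exists a complex root α ≠ λ with |α| > 1. -/

import Mathlib

open Polynomial

lemma multiset_prod_le_one {s : Multiset ℝ} (h0 : ∀ x ∈ s, 0 ≤ x) (h1 : ∀ x ∈ s, x ≤ 1) :
    s.prod ≤ 1 := by
  induction s using Multiset.induction_on with
  | empty => simp
  | cons a s ih =>
    simp only [Multiset.prod_cons]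
    have ha0 : 0 ≤ a := h0 a (Multiset.mem_cons_self a s)
    have ha1 : a ≤ 1 := h1 a (Multiset.mem_cons_self a s)
    have ihp : s.prod ≤ 1 := ih (fun x hx => h0 x (Multiset.mem_cons_of_mem hx))
      (fun x hx => h1 x (Multiset.mem_cons_of_mem hx))
    have hsp : 0 ≤ s.prod := Multiset.prod_nonneg (fun x hx => h0 x (Multiset.mem_cons_of_mem hx))
    nlinarith

section main
variable (a : ℤ) (n : ℕ) (p : ℕ)

-- the complex version of the polynomial
noncomputable def gpoly : Polynomial ℂ := X ^ n - C (a : ℂ) * X ^ (n - 1) - C (p : ℂ)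

lemma gpoly_eq_map : gpoly a n p = (X ^ n - C a * X ^ (n-1) - C (p:ℤ)).map (algebraMap ℤ ℂ) := by
  simp [gpoly, Polynomial.map_sub, Polynomial.map_pow, Polynomial.map_mul]

lemma aeval_eq_eval_gpoly (z : ℂ) :
    aeval z (X ^ n - C a * X ^ (n-1) - C (p:ℤ)) = eval z (gpoly a n p) := by
  rw [gpoly_eq_map, eval_map, aeval_def]

lemma gpoly_monic (hn : 2 ≤ n) : (gpoly a n p).Monic := by
  obtain ⟨m, rfl⟩ : ∃ m, n = m + 2 := ⟨n - 2, by omega⟩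
  have : gpoly a (m+2) p = X ^ (m+1+1) - (C (a:ℂ) * X ^ (m+1) + C (p:ℂ)) := by
    simp [gpoly]; ring
  rw [this]
  apply monic_X_pow_sub
  have h1 : degree (C (a:ℂ) * X ^ (m+1)) ≤ ((m+1 : ℕ) : WithBot ℕ) :=
    degree_C_mul_X_pow_le (m+1) _
  have h2 : degree (C ((p:ℕ) : ℂ)) ≤ ((m+1 : ℕ) : WithBot ℕ) :=
    degree_C_le.trans (by exact_mod_cast Nat.zero_le _)
  refine lt_of_le_of_lt (le_trans (degree_add_le _ _) (max_le h1 h2)) ?_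
  exact_mod_cast Nat.lt_succ_self (m+1)
end main

section main2
variable {a : ℤ} {n : ℕ} {p : ℕ}

lemma gpoly_coeff_zero (hn : 2 ≤ n) : (gpoly a n p).coeff 0 = -(p : ℂ) := by
  obtain ⟨m, rfl⟩ : ∃ m, n = m + 2 := ⟨n - 2, by omega⟩
  simp [gpoly, coeff_X_pow]

lemma gpoly_natDegree (hn : 2 ≤ n) : (gpoly a n p).natDegree = n := by
  obtain ⟨m, rfl⟩ : ∃ m, n = m + 2 := ⟨n - 2, by omega⟩
  have h := (gpoly_monic a (m+2) p (by omega)).natDegree_eq_zero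
  have : gpoly a (m+2) p = X ^ (m+1+1) - (C (a:ℂ) * X ^ (m+1) + C (p:ℂ)) := by
    simp [gpoly]; ring
  rw [this]
  have h1 : degree (C (a:ℂ) * X ^ (m+1)) ≤ ((m+1 : ℕ) : WithBot ℕ) :=
    degree_C_mul_X_pow_le (m+1) _
  have h2 : degree (C ((p:ℕ) : ℂ)) ≤ ((m+1 : ℕ) : WithBot ℕ) :=
    degree_C_le.trans (by exact_mod_cast Nat.zero_le _)
  have hlt : (C (a:ℂ) * X ^ (m+1) + C (p:ℂ)).degree < ((m+1+1 : ℕ) : WithBot ℕ) :=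
    lt_of_le_of_lt (le_trans (degree_add_le _ _) (max_le h1 h2))
      (by exact_mod_cast Nat.lt_succ_self (m+1))
  have hnd : (C (a:ℂ) * X ^ (m+1) + C (p:ℂ)).natDegree < (X ^ (m+1+1) : ℂ[X]).natDegree := by
    rw [natDegree_X_pow]
    have := natDegree_le_iff_degree_le.mpr (le_trans (degree_add_le _ _) (max_le h1 h2))
    omega
  rw [natDegree_sub_eq_left_of_natDegree_lt hnd, natDegree_X_pow]

lemma prod_abs_roots (hn : 2 ≤ n) :
    ((gpoly a n p).roots.map (fun z => ‖z‖)).prod = p := by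
  have hmo := gpoly_monic a n p hn
  have hsp : (gpoly a n p).Splits := IsAlgClosed.splits _
  have := hsp.coeff_zero_eq_prod_roots_of_monic hmo
  rw [gpoly_coeff_zero hn] at this
  have habs := congrArg norm this
  simp only [norm_neg, norm_mul, norm_pow, norm_one, one_pow, one_mul,
    Complex.norm_natCast] at habs
  rw [habs]
  exact (map_multiset_prod (normHom (α := ℂ)) _).symm
end main2

section main3
variable {a : ℤ} {n : ℕ} {p : ℕ}

lemma eval_gpoly (z : ℂ) : eval z (gpoly a n p) = z^n - a * z^(n-1) - p := by
  simp [gpoly]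

lemma rootMult_le_one (ha : 1 ≤ a) (hn : 2 ≤ n) (hp : p.Prime) {z : ℂ}
    (hz1 : 1 < ‖z‖) : rootMultiplicity z (gpoly a n p) ≤ 1 := by
  obtain ⟨m, rfl⟩ : ∃ m, n = m + 2 := ⟨n - 2, by omega⟩
  by_contra h
  push_neg at h
  have hg0 : (gpoly a (m+2) p) ≠ 0 := (gpoly_monic a (m+2) p (by omega)).ne_zero
  have hroot : eval z (gpoly a (m+2) p) = 0 :=
    (rootMultiplicity_pos hg0).mp (by omega)
  have hd : (derivative (gpoly a (m+2) p)).IsRoot z := by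
    have := isRoot_iterate_derivative_of_lt_rootMultiplicity (p := gpoly a (m+2) p)
      (t := z) (n := 1) h
    simpa using this
  have hder : derivative (gpoly a (m+2) p)
      = C ((m+2 : ℕ) : ℂ) * X ^ (m+1) - C (a : ℂ) * (C ((m+1 : ℕ) : ℂ) * X ^ m) := by
    simp [gpoly, derivative_X_pow]
    rw [map_ofNat]; ring
  have hdeval : ((m+2 : ℕ) : ℂ) * z ^ (m+1) - (a : ℂ) * ((m+1 : ℕ) : ℂ) * z ^ m = 0 := by
    have h2 : eval z (derivative (gpoly a (m+2) p)) = 0 := hd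
    rw [hder] at h2
    simpa [mul_assoc] using h2
  have hz0 : z ≠ 0 := by
    intro h0
    rw [h0] at hz1
    norm_num at hz1
  have hzm : z ^ m ≠ 0 := pow_ne_zero m hz0
  have hcancel : ((m+2 : ℕ) : ℂ) * z = (a : ℂ) * ((m+1 : ℕ) : ℂ) := by
    apply mul_right_cancel₀ hzm
    have : ((m+2 : ℕ) : ℂ) * z ^ (m+1) = ((m+2 : ℕ) : ℂ) * z * z ^ m := by ring
    rw [← this]
    linear_combination hdeval
  set r : ℝ := (a : ℝ) * (m+1) / (m+2) with hr
  have hzr : z = (r : ℂ) := by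
    have hm2' : ((m:ℂ) + 2) ≠ 0 := by exact_mod_cast (show ((m+2:ℕ)) ≠ 0 by omega)
    push_cast at hcancel
    rw [hr]
    push_cast
    rw [eq_div_iff hm2']
    linear_combination hcancel
  have hre : r ^ (m+2) - (a:ℝ) * r ^ (m+1) - (p:ℝ) = 0 := by
    have : ((r ^ (m+2) - (a:ℝ) * r ^ (m+1) - (p:ℝ) : ℝ) : ℂ) = 0 := by
      push_cast
      rw [← hzr]
      rw [eval_gpoly] at hroot
      simpa using hroot
    exact_mod_cast this
  have hr0 : 0 ≤ r := by
    rw [hr]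
    positivity
  have hra : r ≤ (a : ℝ) := by
    rw [hr, div_le_iff₀ (by positivity)]
    have : (1:ℝ) ≤ (a:ℝ) := by exact_mod_cast ha
    nlinarith
  have hpow : 0 ≤ r ^ (m+1) := by positivity
  have hp2 : (2:ℝ) ≤ (p:ℝ) := by exact_mod_cast hp.two_le
  nlinarith [pow_succ r (m+1), mul_le_mul_of_nonneg_left hra hpow]

lemma exists_big (ha : 1 ≤ a) (hn : 2 ≤ n) (hp : p.Prime) :
    ∃ z, eval z (gpoly a n p) = 0 ∧ 1 < ‖z‖ := by
  by_contra h
  push_neg at h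
  have hprod := prod_abs_roots (a := a) (p := p) hn
  have hle : ((gpoly a n p).roots.map (fun z => ‖z‖)).prod ≤ 1 := by
    apply multiset_prod_le_one
    · intro x hx
      obtain ⟨w, hw, rfl⟩ := Multiset.mem_map.mp hx
      exact norm_nonneg w
    · intro x hx
      obtain ⟨w, hw, rfl⟩ := Multiset.mem_map.mp hx
      exact h w ((mem_roots'.mp hw).2)
  have hp2 : (2:ℝ) ≤ (p:ℝ) := by exact_mod_cast hp.two_le
  rw [hprod] at hle
  linarith

lemma key (ha : 1 ≤ a) (hn : 2 ≤ n) (hp : p.Prime) (hpa : a + 1 < (p:ℤ)) (z : ℂ)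
    (hz : eval z (gpoly a n p) = 0) (hz1 : 1 < ‖z‖) :
    ∃ w, eval w (gpoly a n p) = 0 ∧ w ≠ z ∧ 1 < ‖w‖ := by
  by_contra h
  push_neg at h
  have hg0 : (gpoly a n p) ≠ 0 := (gpoly_monic a n p hn).ne_zero
  have hzr : z ∈ (gpoly a n p).roots := mem_roots'.mpr ⟨hg0, hz⟩
  classical
  have hznot : z ∉ (gpoly a n p).roots.erase z := by
    rw [← Multiset.count_eq_zero]
    have h1 := Multiset.count_erase_self z (gpoly a n p).roots
    have h2 : (gpoly a n p).roots.count z ≤ 1 := by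
      rw [count_roots]
      exact rootMult_le_one ha hn hp hz1
    omega
  have hcons : z ::ₘ (gpoly a n p).roots.erase z = (gpoly a n p).roots :=
    Multiset.cons_erase hzr
  have hprod := prod_abs_roots (a := a) (p := p) hn
  rw [← hcons] at hprod
  rw [Multiset.map_cons, Multiset.prod_cons] at hprod
  have hle : (((gpoly a n p).roots.erase z).map (fun z => ‖z‖)).prod ≤ 1 := by
    apply multiset_prod_le_one
    · intro x hx
      obtain ⟨w, hw, rfl⟩ := Multiset.mem_map.mp hx
      exact norm_nonneg w
    · intro x hx
      obtain ⟨w, hw, rfl⟩ := Multiset.mem_map.mp hx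
      have hwroot : eval w (gpoly a n p) = 0 :=
        (mem_roots'.mp (Multiset.mem_of_mem_erase hw)).2
      have hwz : w ≠ z := fun he => hznot (he ▸ hw)
      exact h w hwroot hwz
  -- so p ≤ |z|
  set R := ‖z‖ with hR
  have hRp : (p:ℝ) ≤ R := by
    have h0 : 0 ≤ R := norm_nonneg z
    nlinarith
  -- root bound
  obtain ⟨m, rfl⟩ : ∃ m, n = m + 2 := ⟨n - 2, by omega⟩
  have heq : z ^ (m+2) = (a:ℂ) * z ^ (m+1) + (p:ℂ) := by
    rw [eval_gpoly] at hz
    have : m + 2 - 1 = m + 1 := by omega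
    rw [this] at hz
    linear_combination hz
  have habs : R ^ (m+2) ≤ (a:ℝ) * R ^ (m+1) + (p:ℝ) := by
    have := congrArg norm heq
    rw [norm_pow] at this
    calc R ^ (m+2) = ‖(a:ℂ) * z ^ (m+1) + (p:ℂ)‖ := this
      _ ≤ ‖(a:ℂ) * z ^ (m+1)‖ + ‖(p:ℂ)‖ := norm_add_le _ _
      _ = (a:ℝ) * R ^ (m+1) + (p:ℝ) := by
          rw [norm_mul, norm_pow, Complex.norm_natCast, Complex.norm_intCast]
          congr 2
          rw [abs_eq_self.mpr]
          exact_mod_cast (by omega : (0:ℤ) ≤ a)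
  have hpa2 : (a:ℝ) + 2 ≤ (p:ℝ) := by exact_mod_cast (by omega : a + 2 ≤ (p:ℤ))
  have ha1 : (1:ℝ) ≤ (a:ℝ) := by exact_mod_cast ha
  have hRself : R ≤ R ^ (m+1) := le_self_pow₀ (le_of_lt hz1) (by omega)
  nlinarith [pow_succ R (m+1)]
end main3

/-- The polynomial `f_{n,a,p}(x) = x^n - a*x^(n-1) - p` in `ℤ[x]`. -/
noncomputable def fnap (n : ℕ) (a p : ℤ) : Polynomial ℤ :=
  X ^ n - C a * X ^ (n - 1) - C p

theorem stmt_11 (a : ℤ) (n : ℕ) (p : ℕ) (ha : 1 ≤ a) (hn : 2 ≤ n) (hp : p.Prime)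
    (hpa : a + 1 < (p : ℤ)) :
    (∃ α β : ℂ, α ≠ β ∧ Polynomial.aeval α (fnap n a (p : ℤ)) = 0 ∧
      Polynomial.aeval β (fnap n a (p : ℤ)) = 0 ∧
      1 < ‖α‖ ∧ 1 < ‖β‖) ∧
    ∀ lam : ℝ, 0 < lam → Polynomial.aeval lam (fnap n a (p : ℤ)) = 0 →
      ∃ α : ℂ, Polynomial.aeval α (fnap n a (p : ℤ)) = 0 ∧ α ≠ (lam : ℂ) ∧
        1 < ‖α‖ := by
  have haev : ∀ z : ℂ, Polynomial.aeval z (fnap n a (p : ℤ)) = eval z (gpoly a n p) := by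
    intro z
    rw [show fnap n a (p:ℤ) = X ^ n - C a * X ^ (n-1) - C ((p:ℕ):ℤ) from rfl]
    exact aeval_eq_eval_gpoly a n p z
  constructor
  · obtain ⟨z, hz, hz1⟩ := exists_big ha hn hp
    obtain ⟨w, hw, hwz, hw1⟩ := key ha hn hp hpa z hz hz1
    exact ⟨w, z, hwz, by rw [haev]; exact hw, by rw [haev]; exact hz, hw1, hz1⟩
  · intro lam hlam0 hlam
    have hl : lam ^ n - (a:ℝ) * lam ^ (n-1) - (p:ℝ) = 0 := by
      have := hlam
      simp only [fnap, map_sub, map_mul, map_pow, aeval_X, aeval_C, algebraMap_int_eq, eq_intCast, map_intCast] at this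
      push_cast at this
      linarith [this]
    have hc : eval (lam : ℂ) (gpoly a n p) = 0 := by
      rw [eval_gpoly]
      have h2 := congrArg (fun x : ℝ => (x : ℂ)) hl
      push_cast at h2
      convert h2 using 2 <;> push_cast <;> ring
    by_cases h1 : 1 < lam
    · obtain ⟨w, hw, hwz, hw1⟩ := key ha hn hp hpa (lam : ℂ) hc
        (by rw [Complex.norm_real, Real.norm_eq_abs, abs_of_pos hlam0]; exact h1)
      exact ⟨w, by rw [haev]; exact hw, hwz, hw1⟩
    · obtain ⟨z, hz, hz1⟩ := exists_big ha hn hp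
      refine ⟨z, by rw [haev]; exact hz, ?_, hz1⟩
      intro he
      rw [he, Complex.norm_real, Real.norm_eq_abs, abs_of_pos hlam0] at hz1
      linarith
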